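/- arXiv:1010.0429 — 6 statements merged into one kernel-verified Lean document; each statement's English description precedes it below -/
import Mathlib

section
/- The sequence q_n = Σ_{k=0}^n C(n,k)^2 (n+k)! satisfies the third-order linear recurrence (16n-15) q_{n+1} = (128n^3 + 40n^2 - 82n - 45) q_n - n^2(256n^3 - 240n^2 + 64n - 7) q_{n-1} + n^2(n-1)^2(16n+1) q_{n-2} for all n ≥ 2. -/
/-- The Aptekarev denominator sequence `qₙ = ∑ₖ C(n,k)² (n+k)!`, as an integer. -/
def aptekarevQ (n : ℕ) : ℤ :=
  ∑ k ∈ Finset.range (n + 1), ((n.choose k : ℤ)) ^ 2 * (n + k).factorial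

/-- The polynomial part of the Zeilberger certificate. -/
def certN (M K : ℤ) : ℤ :=
  4096*M^6+51456*M^5+266992*M^4+733703*M^3+1127914*M^2+920277*M+311058
  - (8192*M^5+83712*M^4+339072*M^3+680643*M^2+676356*M+265419)*K
  + (4096*M^4+30464*M^3+85168*M^2+106101*M+49698)*K^2
  - (256*M^2+1056*M+1089)*K^3

/-- The telescoping certificate. -/
def certG (m k : ℕ) : ℤ :=
  (k : ℤ)^2 * certN (m : ℤ) (k : ℤ) * (((m+3).choose k : ℤ))^2 * ((m+k).factorial : ℤ)

lemma cert (m k : ℕ) (hk : k ≤ m + 3) :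
    ((m:ℤ)+3)^2*(16*(m:ℤ)+33) *
      ((16*(m:ℤ)+17) * ((((m+3).choose k : ℤ))^2 * (((m+3+k).factorial : ℕ) : ℤ))
      - (128*(m:ℤ)^3+808*(m:ℤ)^2+1614*(m:ℤ)+975) * ((((m+2).choose k : ℤ))^2 * (((m+2+k).factorial : ℕ) : ℤ))
      + ((m:ℤ)+2)^2*(256*(m:ℤ)^3+1296*(m:ℤ)^2+2176*(m:ℤ)+1209) * ((((m+1).choose k : ℤ))^2 * (((m+1+k).factorial : ℕ) : ℤ))
      - ((m:ℤ)+2)^2*((m:ℤ)+1)^2*(16*(m:ℤ)+33) * (((m.choose k : ℤ))^2 * (((m+k).factorial : ℕ) : ℤ)))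
    = certG m (k+1) - certG m k := by
  set M : ℤ := (m : ℤ) with hM
  set K : ℤ := (k : ℤ) with hK
  have hD : (((M+1)*(M+2)*(M+3)*(K+1))^2 : ℤ) ≠ 0 := by positivity
  have h2 : (M+3) * (((m+2).choose k : ℕ) : ℤ) = (M+3-K) * (((m+3).choose k : ℕ) : ℤ) := by
    have h := Nat.choose_mul_succ_eq (m+2) k
    zify [hk] at h
    linear_combination h
  have h1 : (M+2) * (((m+1).choose k : ℕ) : ℤ) = (M+2-K) * (((m+2).choose k : ℕ) : ℤ) := by
    rcases le_or_gt k (m+2) with h | h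
    · have hh := Nat.choose_mul_succ_eq (m+1) k
      zify [h] at hh
      linear_combination hh
    · have e1 : (m+1).choose k = 0 := Nat.choose_eq_zero_of_lt (by omega)
      have e2 : (m+2).choose k = 0 := Nat.choose_eq_zero_of_lt h
      rw [e1, e2]; simp
  have h0 : (M+1) * ((m.choose k : ℕ) : ℤ) = (M+1-K) * (((m+1).choose k : ℕ) : ℤ) := by
    rcases le_or_gt k (m+1) with h | h
    · have hh := Nat.choose_mul_succ_eq m k
      zify [h] at hh
      linear_combination hh
    · have e1 : m.choose k = 0 := Nat.choose_eq_zero_of_lt (by omega)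
      have e2 : (m+1).choose k = 0 := Nat.choose_eq_zero_of_lt h
      rw [e1, e2]; simp
  have hs : (K+1) * (((m+3).choose (k+1) : ℕ) : ℤ) = (M+3-K) * (((m+3).choose k : ℕ) : ℤ) := by
    have hh := Nat.choose_succ_right_eq (m+3) k
    zify [hk] at hh
    linear_combination hh
  have f1 : (((m+1+k).factorial : ℕ) : ℤ) = (M+K+1) * (((m+k).factorial : ℕ) : ℤ) := by
    rw [show m+1+k = (m+k)+1 by omega, Nat.factorial_succ]
    push_cast; ring
  have f2 : (((m+2+k).factorial : ℕ) : ℤ) = (M+K+2)*((M+K+1) * (((m+k).factorial : ℕ) : ℤ)) := by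
    rw [show m+2+k = ((m+k)+1)+1 by omega, Nat.factorial_succ, Nat.factorial_succ]
    push_cast; ring
  have f3 : (((m+3+k).factorial : ℕ) : ℤ) = (M+K+3)*((M+K+2)*((M+K+1) * (((m+k).factorial : ℕ) : ℤ))) := by
    rw [show m+3+k = (((m+k)+1)+1)+1 by omega, Nat.factorial_succ, Nat.factorial_succ,
      Nat.factorial_succ]
    push_cast; ring
  have fG : (((m+(k+1)).factorial : ℕ) : ℤ) = (M+K+1) * (((m+k).factorial : ℕ) : ℤ) := by
    rw [show m+(k+1) = (m+k)+1 by omega, Nat.factorial_succ]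
    push_cast; ring
  have s2 : ((M+3) * (((m+2).choose k : ℕ) : ℤ))^2
      = ((M+3-K) * (((m+3).choose k : ℕ) : ℤ))^2 := by rw [h2]
  have hc1 : (M+2)*(M+3)*(((m+1).choose k : ℕ) : ℤ)
      = (M+2-K)*(M+3-K)*(((m+3).choose k : ℕ) : ℤ) := by
    linear_combination (M+3)*h1 + (M+2-K)*h2
  have s1 : ((M+2)*(M+3)*(((m+1).choose k : ℕ) : ℤ))^2
      = ((M+2-K)*(M+3-K)*(((m+3).choose k : ℕ) : ℤ))^2 := by rw [hc1]
  have hc0 : (M+1)*(M+2)*(M+3)*((m.choose k : ℕ) : ℤ)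
      = (M+1-K)*(M+2-K)*(M+3-K)*(((m+3).choose k : ℕ) : ℤ) := by
    linear_combination (M+2)*(M+3)*h0 + (M+1-K)*(M+3)*h1 + (M+1-K)*(M+2-K)*h2
  have s0 : ((M+1)*(M+2)*(M+3)*((m.choose k : ℕ) : ℤ))^2
      = ((M+1-K)*(M+2-K)*(M+3-K)*(((m+3).choose k : ℕ) : ℤ))^2 := by rw [hc0]
  have ss : ((K+1) * (((m+3).choose (k+1) : ℕ) : ℤ))^2
      = ((M+3-K) * (((m+3).choose k : ℕ) : ℤ))^2 := by rw [hs]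
  apply mul_left_cancel₀ hD
  simp only [certG, certN]
  rw [f3, f2, f1, fG]
  push_cast
  linear_combination
    (-((M+1)*(M+2)*(K+1))^2 * ((M+3)^2*(16*M+33)) * (128*M^3+808*M^2+1614*M+975)
       * (M+K+1)*(M+K+2) * (((m+k).factorial : ℕ) : ℤ)) * s2
    + (((M+1)*(K+1))^2 * ((M+3)^2*(16*M+33)) * ((M+2)^2*(256*M^3+1296*M^2+2176*M+1209))
       * (M+K+1) * (((m+k).factorial : ℕ) : ℤ)) * s1
    + (-(K+1)^2 * ((M+3)^2*(16*M+33)) * ((M+2)^2*(M+1)^2*(16*M+33))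
       * (((m+k).factorial : ℕ) : ℤ)) * s0
    + (-((M+1)*(M+2)*(M+3))^2 * (K+1)^2 *
        (4096*M^6+51456*M^5+266992*M^4+733703*M^3+1127914*M^2+920277*M+311058
          - (8192*M^5+83712*M^4+339072*M^3+680643*M^2+676356*M+265419)*(K+1)
          + (4096*M^4+30464*M^3+85168*M^2+106101*M+49698)*(K+1)^2
          - (256*M^2+1056*M+1089)*(K+1)^3)
       * (M+K+1) * (((m+k).factorial : ℕ) : ℤ)) * ss

lemma aptekarevQ_eq_sum (a N : ℕ) (h : a + 1 ≤ N) :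
    aptekarevQ a = ∑ k ∈ Finset.range N, ((a.choose k : ℤ))^2 * (((a+k).factorial : ℕ) : ℤ) := by
  rw [aptekarevQ]
  apply Finset.sum_subset (Finset.range_subset_range.2 h)
  intro x _ hx
  rw [Finset.mem_range, not_lt] at hx
  rw [Nat.choose_eq_zero_of_lt (by omega)]
  simp

theorem stmt_1 (n : ℕ) (hn : 2 ≤ n) :
    (16 * (n : ℤ) - 15) * aptekarevQ (n + 1) =
      (128 * (n : ℤ) ^ 3 + 40 * n ^ 2 - 82 * n - 45) * aptekarevQ n
      - (n : ℤ) ^ 2 * (256 * (n : ℤ) ^ 3 - 240 * n ^ 2 + 64 * n - 7) * aptekarevQ (n - 1)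
      + (n : ℤ) ^ 2 * ((n : ℤ) - 1) ^ 2 * (16 * (n : ℤ) + 1) * aptekarevQ (n - 2) := by
  obtain ⟨m, rfl⟩ : ∃ m, n = m + 2 := ⟨n - 2, by omega⟩
  rw [show m+2+1 = m+3 from rfl, show m+2-1 = m+1 from rfl, show m+2-2 = m from rfl]
  set M : ℤ := (m : ℤ) with hM
  have main : ((M+3)^2*(16*M+33)) *
      ((16*M+17) * aptekarevQ (m+3)
      - (128*M^3+808*M^2+1614*M+975) * aptekarevQ (m+2)
      + (M+2)^2*(256*M^3+1296*M^2+2176*M+1209) * aptekarevQ (m+1)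
      - (M+2)^2*(M+1)^2*(16*M+33) * aptekarevQ m) = 0 := by
    have tele : ∑ k ∈ Finset.range (m+4), (certG m (k+1) - certG m k) = 0 := by
      rw [Finset.sum_range_sub (certG m)]
      have g1 : certG m (m+4) = 0 := by
        simp only [certG]
        rw [Nat.choose_eq_zero_of_lt (by omega)]
        simp
      have g0 : certG m 0 = 0 := by simp [certG]
      rw [g1, g0, sub_zero]
    rw [← tele]
    rw [aptekarevQ_eq_sum (m+3) (m+4) (by omega), aptekarevQ_eq_sum (m+2) (m+4) (by omega),
      aptekarevQ_eq_sum (m+1) (m+4) (by omega), aptekarevQ_eq_sum m (m+4) (by omega)]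
    rw [Finset.mul_sum, Finset.mul_sum, Finset.mul_sum, Finset.mul_sum,
      ← Finset.sum_sub_distrib, ← Finset.sum_add_distrib, ← Finset.sum_sub_distrib,
      Finset.mul_sum]
    refine Finset.sum_congr rfl (fun k hk => ?_)
    rw [Finset.mem_range] at hk
    have := cert m k (by omega)
    linear_combination this
  have hpref : ((M+3)^2*(16*M+33) : ℤ) ≠ 0 := by positivity
  have hX := (mul_eq_zero.mp main).resolve_left hpref
  push_cast
  linear_combination hX
end

section
/- For rational a > -1 and rational b > 0 and all n, k with 0 ≤ k ≤ n, one has μ_a^{2n} · C(n,k)^2 · (a+1)_{n+k}/(n+k)! ∈ ℤ, where μ_a^m = (den a)^m · Π_{p | den a} p^{⌊m/(p-1)⌋}, the product being over primes p dividing the denominator of a. Consequently μ_a^{2n} · q_n(a,b) ∈ n! ℤ[b], where q_n(a,b) = Σ_{k=0}^n C(n,k)^2 (a+1)_{n+k} b^{n-k}. -/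
/-- `μ_a^m = (den a)^m · ∏_{p | den a} p^(⌊m/(p-1)⌋)`, product over primes dividing `den a`. -/
def mu (a : ℚ) (m : ℕ) : ℕ :=
  a.den ^ m * ∏ p ∈ a.den.primeFactors, p ^ (m / (p - 1))

/-- Pochhammer symbol `(a)_m = a(a+1)⋯(a+m-1)` for rational `a`. -/
def pochQ (a : ℚ) (m : ℕ) : ℚ := ∏ j ∈ Finset.range m, (a + j)

lemma asc_eval_eq_prod (m : ℕ) (s : ℤ) :
    (ascPochhammer ℤ m).eval s = ∏ j ∈ Finset.range m, (s + j) := by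
  induction m with
  | zero => simp
  | succ t ih => rw [ascPochhammer_succ_eval, Finset.prod_range_succ, ih]

lemma fact_dvd_prod (m : ℕ) (s : ℤ) :
    (m.factorial : ℤ) ∣ ∏ j ∈ Finset.range m, (s + j) := by
  refine ⟨Ring.multichoose s m, ?_⟩
  rw [← asc_eval_eq_prod, ← Polynomial.ascPochhammer_smeval_eq_eval,
    ← Ring.factorial_nsmul_multichoose_eq_ascPochhammer]
  simp [nsmul_eq_mul]

lemma main_int (a : ℚ) (n k : ℕ) (hk : k ≤ n) : ∃ z : ℤ,
    (mu a (2 * n) : ℚ) * pochQ (a + 1) (n + k) / (n + k).factorial = z := by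
  set d := a.den with hd_def
  set c := a.num with hc_def
  set m := n + k with hm_def
  have hd0 : d ≠ 0 := a.den_nz
  have hdQ : (d : ℚ) ≠ 0 := by exact_mod_cast hd0
  have hfact0 : m.factorial ≠ 0 := Nat.factorial_ne_zero m
  -- pochQ identity
  set Pn : ℤ := ∏ j ∈ Finset.range m, (c + d * (j + 1)) with hPn_def
  have hfac : ∀ j : ℕ, a + 1 + (j : ℚ) = ((c + d * (j + 1) : ℤ) : ℚ) / d := by
    intro j
    rw [eq_div_iff hdQ]
    push_cast
    linear_combination Rat.mul_den_eq_num a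
  have hpoch : pochQ (a + 1) m = (Pn : ℚ) / (d : ℚ) ^ m := by
    unfold pochQ
    rw [eq_div_iff (pow_ne_zero m hdQ), hPn_def,
      show ((d : ℚ) ^ m) = ∏ _j ∈ Finset.range m, (d : ℚ) by
        rw [Finset.prod_const, Finset.card_range],
      ← Finset.prod_mul_distrib]
    push_cast
    refine Finset.prod_congr rfl fun j _ => ?_
    linear_combination Rat.mul_den_eq_num a
  -- the d-part and coprime part of m!
  set A : ℕ := Nat.gcd m.factorial (d ^ m.factorial) with hA_def
  set B : ℕ := m.factorial / A with hB_def
  have hA_dvd : A ∣ m.factorial := Nat.gcd_dvd_left _ _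
  have hAB : A * B = m.factorial := Nat.mul_div_cancel' hA_dvd
  have hA0 : A ≠ 0 := by
    intro h; rw [h, zero_mul] at hAB; exact hfact0 hAB.symm
  have hB0 : B ≠ 0 := by
    intro h; rw [h, mul_zero] at hAB; exact hfact0 hAB.symm
  have hBdvd : B ∣ m.factorial := Nat.div_dvd_of_dvd hA_dvd
  -- B is coprime to d
  have hBd : Nat.Coprime B d := by
    by_contra h
    obtain ⟨p, hp, hpdvd⟩ := Nat.exists_prime_and_dvd h
    have hpB : p ∣ B := hpdvd.trans (Nat.gcd_dvd_left _ _)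
    have hpd : p ∣ d := hpdvd.trans (Nat.gcd_dvd_right _ _)
    set v := m.factorial.factorization p with hv_def
    have hv1 : p ^ v ∣ m.factorial := Nat.ordProj_dvd _ _
    have hv2 : p ^ v ∣ d ^ m.factorial := by
      calc p ^ v ∣ p ^ m.factorial :=
            pow_dvd_pow p (le_of_lt (Nat.factorization_lt p hfact0))
        _ ∣ d ^ m.factorial := pow_dvd_pow_of_dvd hpd _
    have hvA : p ^ v ∣ A := Nat.dvd_gcd hv1 hv2
    have hvv : p ^ (v + 1) ∣ m.factorial := by
      have h1 : A * p ∣ m.factorial := (Nat.dvd_div_iff_mul_dvd hA_dvd).mp hpB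
      calc p ^ (v + 1) = p ^ v * p := pow_succ p v
        _ ∣ A * p := mul_dvd_mul_right hvA p
        _ ∣ m.factorial := h1
    have := (hp.pow_dvd_iff_le_factorization hfact0).mp hvv
    omega
  -- B divides Pn
  have hBPn : (B : ℤ) ∣ Pn := by
    have hgcd : Int.gcd (d : ℤ) (B : ℤ) = 1 := by
      rw [Int.gcd_natCast_natCast]
      exact Nat.coprime_comm.mp hBd
    set u := Int.gcdA (d : ℤ) (B : ℤ) with hu_def
    have hbez : (1 : ℤ) = d * u + B * Int.gcdB (d : ℤ) (B : ℤ) := by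
      have h := Int.gcd_eq_gcd_ab (d : ℤ) (B : ℤ)
      rw [hgcd] at h
      exact_mod_cast h
    have hdu : ((d : ℤ) : ZMod B) * ((u : ℤ) : ZMod B) = 1 := by
      have h2 : (((d * u + B * Int.gcdB (d : ℤ) (B : ℤ) : ℤ)) : ZMod B) = 1 := by
        rw [← hbez]; simp
      push_cast at h2
      rw [ZMod.natCast_self] at h2
      simpa using h2
    push_cast at hdu
    have hprod : u ^ m * Pn = ∏ j ∈ Finset.range m, (u * (c + d * (j + 1))) := by
      rw [Finset.prod_mul_distrib, Finset.prod_const, Finset.card_range]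
    have key : ((u : ℤ) : ZMod B) ^ m * ((Pn : ℤ) : ZMod B) = 0 := by
      have h3 : ((u ^ m * Pn : ℤ) : ZMod B)
          = ((∏ j ∈ Finset.range m, (u * c + 1 + j) : ℤ) : ZMod B) := by
        rw [hprod, Int.cast_prod, Int.cast_prod]
        refine Finset.prod_congr rfl fun j _ => ?_
        push_cast
        linear_combination ((j : ZMod B) + 1) * hdu
      have h4 : ((∏ j ∈ Finset.range m, (u * c + 1 + j) : ℤ) : ZMod B) = 0 := by
        rw [ZMod.intCast_zmod_eq_zero_iff_dvd]
        exact dvd_trans (Int.natCast_dvd_natCast.mpr hBdvd) (fact_dvd_prod m _)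
      push_cast at h3 h4
      rw [h3]
      exact h4
    have hu_unit : IsUnit (((u : ℤ) : ZMod B)) :=
      IsUnit.of_mul_eq_one _ (by rw [mul_comm] at hdu; exact hdu)
    have := ((hu_unit.pow m).mul_right_eq_zero).mp key
    exact (ZMod.intCast_zmod_eq_zero_iff_dvd Pn B).mp this
  -- A divides M
  set M : ℕ := ∏ p ∈ d.primeFactors, p ^ (2 * n / (p - 1)) with hM_def
  have hM0 : M ≠ 0 := by
    rw [hM_def]
    refine Finset.prod_ne_zero_iff.mpr fun p hp => ?_
    exact pow_ne_zero _ (Nat.Prime.ne_zero (Nat.prime_of_mem_primeFactors hp))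
  have hAM : A ∣ M := by
    rw [← Nat.factorization_le_iff_dvd hA0 hM0]
    intro p
    by_cases hp : p.Prime
    · by_cases hpd : p ∈ d.primeFactors
      · have h1 : A.factorization p ≤ m.factorial.factorization p :=
          (Nat.factorization_le_iff_dvd hA0 hfact0).mpr hA_dvd p
        have hp1 : 0 < p - 1 := by have := hp.two_le; omega
        have h2 : m.factorial.factorization p ≤ 2 * n / (p - 1) := by
          haveI : Fact p.Prime := ⟨hp⟩
          rw [Nat.factorization_def _ hp]
          rw [Nat.le_div_iff_mul_le hp1]
          have h3 := sub_one_mul_padicValNat_factorial (p := p) m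
          have h5 : (p - 1) * padicValNat p m.factorial ≤ m := by rw [h3]; omega
          rw [mul_comm]
          exact le_trans h5 (by omega)
        have h4 : 2 * n / (p - 1) ≤ M.factorization p := by
          rw [← hp.pow_dvd_iff_le_factorization hM0]
          exact Finset.dvd_prod_of_mem _ hpd
        exact le_trans (le_trans h1 h2) h4
      · have h5 : d ^ m.factorial ≠ 0 := pow_ne_zero _ hd0
        have h1 : A.factorization p ≤ (d ^ m.factorial).factorization p :=
          (Nat.factorization_le_iff_dvd hA0 h5).mpr (Nat.gcd_dvd_right _ _) p
        rw [Nat.factorization_pow] at h1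
        have : d.factorization p = 0 := by
          rw [Nat.factorization_eq_zero_iff]
          right; left
          intro hdvd
          exact hpd (Nat.mem_primeFactors.mpr ⟨hp, hdvd, hd0⟩)
        simp [this] at h1
        simp [h1]
    · simp [Nat.factorization_eq_zero_of_not_prime _ hp]
  -- assemble
  obtain ⟨t, ht⟩ : (m.factorial : ℤ) ∣ (M : ℤ) * Pn := by
    rw [← hAB]
    push_cast
    exact mul_dvd_mul (Int.natCast_dvd_natCast.mpr hAM) hBPn
  refine ⟨(d : ℤ) ^ (n - k) * t, ?_⟩
  rw [hpoch]
  have hmu : (mu a (2 * n) : ℚ) = (d : ℚ) ^ (2 * n) * (M : ℚ) := by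
    rw [hM_def, hd_def]
    unfold mu
    push_cast
    ring
  have htQ : (M : ℚ) * (Pn : ℚ) = (m.factorial : ℚ) * (t : ℚ) := by
    exact_mod_cast congrArg (Int.cast : ℤ → ℚ) ht
  have hpow : (d : ℚ) ^ (2 * n) = (d : ℚ) ^ (n - k) * (d : ℚ) ^ m := by
    rw [← pow_add]
    congr 1
    omega
  rw [hmu]
  push_cast
  field_simp
  linear_combination (M : ℚ) * (Pn : ℚ) * hpow + (d : ℚ) ^ (n - k) * (d : ℚ) ^ m * htQ

theorem stmt_4 (a b : ℚ) (ha : -1 < a) (hb : 0 < b) (n : ℕ) :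
    (∀ k ≤ n, ∃ z : ℤ,
      (mu a (2 * n) : ℚ) * (n.choose k) ^ 2 * pochQ (a + 1) (n + k) / (n + k).factorial = z) ∧
    ∃ P : Polynomial ℤ, ∀ x : ℚ,
      (mu a (2 * n) : ℚ) *
          ∑ k ∈ Finset.range (n + 1),
            ((n.choose k : ℚ)) ^ 2 * pochQ (a + 1) (n + k) * x ^ (n - k)
        = (n.factorial : ℚ) * Polynomial.aeval x P := by
  have h1 : ∀ k ≤ n, ∃ z : ℤ,
      (mu a (2 * n) : ℚ) * (n.choose k) ^ 2 * pochQ (a + 1) (n + k) / (n + k).factorial = z := by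
    intro k hk
    obtain ⟨z, hz⟩ := main_int a n k hk
    refine ⟨(n.choose k : ℤ) ^ 2 * z, ?_⟩
    push_cast
    rw [← hz]
    ring
  refine ⟨h1, ?_⟩
  -- choose the integers
  have hz : ∀ k : ℕ, k ≤ n → ∃ z : ℤ,
      (mu a (2 * n) : ℚ) * (n.choose k) ^ 2 * pochQ (a + 1) (n + k) = z * (n + k).factorial := by
    intro k hk
    obtain ⟨z, hzz⟩ := h1 k hk
    refine ⟨z, ?_⟩
    rw [div_eq_iff (by positivity : ((n + k).factorial : ℚ) ≠ 0)] at hzz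
    exact_mod_cast hzz
  choose! z hzeq using hz
  refine ⟨∑ k ∈ Finset.range (n + 1),
    Polynomial.C (z k * ((n + k).factorial / n.factorial : ℕ)) * Polynomial.X ^ (n - k), ?_⟩
  intro x
  rw [Finset.mul_sum, map_sum]
  rw [Finset.mul_sum]
  refine Finset.sum_congr rfl fun k hk => ?_
  have hkn : k ≤ n := Nat.lt_succ_iff.mp (Finset.mem_range.mp hk)
  have heq := hzeq k hkn
  have hdvd : n.factorial ∣ (n + k).factorial :=
    Nat.factorial_dvd_factorial (Nat.le_add_right n k)
  have hcast : ((((n + k).factorial / n.factorial : ℕ)) : ℚ) * (n.factorial : ℚ)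
      = ((n + k).factorial : ℚ) := by
    rw [← Nat.cast_mul, Nat.div_mul_cancel hdvd]
  simp only [map_mul, map_pow, Polynomial.aeval_C, Polynomial.aeval_X]
  push_cast
  push_cast at heq
  calc (mu a (2 * n) : ℚ) * ((n.choose k : ℚ) ^ 2 * pochQ (a + 1) (n + k) * x ^ (n - k))
      = ((mu a (2 * n) : ℚ) * (n.choose k : ℚ) ^ 2 * pochQ (a + 1) (n + k)) * x ^ (n - k) := by
        ring
    _ = (z k : ℚ) * ((n + k).factorial : ℚ) * x ^ (n - k) := by rw [heq]
    _ = (n.factorial : ℚ) * ((z k : ℚ) * (((n + k).factorial / n.factorial : ℕ) : ℚ) * x ^ (n - k)) := by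
        rw [← hcast]; ring
end

section
/- Let a_1, a_2 be rationals with a_1, a_2 > -1 and a_2 - a_1 ∉ ℤ. Define q_n(a_1,a_2,b) = Σ_{k=0}^n C(n+a_1-a_2, k) C(n+a_2-a_1, n-k) (a_2+1)_{n+k} b^{n-k}, where generalized binomial coefficients C(x, k) = (x)(x-1)···(x-k+1)/k! are used. Then μ_{a_2-a_1}^n · μ_{a_2}^{2n} · q_n(a_1,a_2,b) ∈ n! ℤ[b]. -/
/-- Generalized binomial coefficient `C(x,k) = x(x-1)⋯(x-k+1)/k!` for rational `x`. -/
def gbinomQ (x : ℚ) (k : ℕ) : ℚ :=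
  (∏ i ∈ Finset.range k, (x - i)) / (k.factorial : ℚ)

open Finset


lemma den_intCast_add (m : ℤ) (q : ℚ) : ((m : ℚ) + q).den = q.den := by
  have hd0 : ((q.den : ℤ) : ℚ) ≠ 0 := by exact_mod_cast q.den_ne_zero
  have hq : q * ((q.den : ℤ) : ℚ) = (q.num : ℚ) := by
    nth_rewrite 1 [← Rat.num_div_den q]
    push_cast
    rw [div_mul_cancel₀ _ (by exact_mod_cast q.den_ne_zero)]
  have h1 : (m:ℚ) + q = ((q.num + m * q.den : ℤ) : ℚ) / ((q.den : ℤ) : ℚ) := by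
    rw [eq_div_iff hd0, add_mul, hq]
    push_cast
    ring
  have hcop : Nat.Coprime (q.num + m * q.den).natAbs ((q.den : ℤ)).natAbs := by
    have hred : Nat.Coprime q.num.natAbs q.den := q.reduced
    have h2 : IsCoprime q.num (q.den : ℤ) := Int.isCoprime_iff_gcd_eq_one.mpr hred
    have h3 : IsCoprime (q.num + m * q.den) (q.den : ℤ) := h2.add_mul_right_left m
    have h4 := Int.isCoprime_iff_gcd_eq_one.mp h3
    simpa [Int.gcd] using h4
  have h5 := Rat.den_div_eq_of_coprime (b := (q.den : ℤ)) (by exact_mod_cast q.pos) hcop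
  rw [h1]
  exact_mod_cast h5

lemma descPoch_prod (a : ℤ) (k : ℕ) :
    ∏ i ∈ range k, (a - i) = (descPochhammer ℤ k).eval a := by
  induction k with
  | zero => simp
  | succ k ih => rw [Finset.prod_range_succ, ih, descPochhammer_succ_eval]

lemma factorial_dvd_descProd (a : ℤ) (k : ℕ) :
    (k.factorial : ℤ) ∣ ∏ i ∈ range k, (a - i) := by
  rw [descPoch_prod, Polynomial.eval_eq_smeval,
    Ring.descPochhammer_eq_factorial_smul_choose]
  exact ⟨Ring.choose a k, by rw [nsmul_eq_mul]⟩

lemma key (x : ℚ) (k : ℕ) : ∃ z : ℤ, (mu x k : ℚ) * gbinomQ x k = (z : ℚ) := by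
  set d := x.den with hd
  set M : ℕ := ∏ p ∈ d.primeFactors, p ^ (k / (p - 1)) with hM
  set N : ℤ := ∏ i ∈ range k, (x.num - i * d) with hN
  have hd0 : (d : ℚ) ≠ 0 := by exact_mod_cast x.den_ne_zero
  have hxd : x * (d : ℚ) = (x.num : ℚ) := by
    nth_rewrite 1 [← Rat.num_div_den x]
    rw [div_mul_cancel₀ _ hd0]
  have hprod : ((d:ℚ))^k * ∏ i ∈ range k, (x - (i:ℚ)) = (N:ℚ) := by
    have h1 : ((d:ℚ))^k * ∏ i ∈ range k, (x - (i:ℚ)) = ∏ i ∈ range k, ((d:ℚ) * (x - (i:ℚ))) := by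
      rw [Finset.prod_mul_distrib, Finset.prod_const, Finset.card_range]
    rw [h1, hN]
    push_cast
    refine Finset.prod_congr rfl fun i _ => ?_
    rw [mul_comm ((d:ℚ)), sub_mul, hxd]
  have hdvd : (k.factorial : ℤ) ∣ (M : ℤ) * N := by
    by_cases hN0 : N = 0
    · simp [hN0]
    have hM0 : M ≠ 0 := by
      rw [hM]
      exact Finset.prod_ne_zero_iff.mpr fun p hp =>
        pow_ne_zero _ (Nat.Prime.ne_zero (Nat.prime_of_mem_primeFactors hp))
    have hMN0 : M * N.natAbs ≠ 0 := mul_ne_zero hM0 (Int.natAbs_ne_zero.mpr hN0)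
    have hnat : k.factorial ∣ M * N.natAbs := by
      rw [← Nat.factorization_le_iff_dvd (Nat.factorial_ne_zero k) hMN0]
      rw [Finsupp.le_def]
      intro p
      by_cases hp : p.Prime
      swap
      · simp [Nat.factorization_eq_zero_of_not_prime _ hp]
      set v := (k.factorial).factorization p with hv
      apply (Nat.Prime.pow_dvd_iff_le_factorization hp hMN0).mp
      have hpvfac : p ^ v ∣ k.factorial := Nat.ordProj_dvd _ _
      by_cases hpd : p ∣ d
      · have hvle : v ≤ k / (p - 1) := by
          have h1 : (v : ℕ∞) ≤ emultiplicity p k.factorial :=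
            le_emultiplicity_of_pow_dvd hpvfac
          have h2 := Nat.Prime.emultiplicity_factorial_le_div_pred hp k
          exact_mod_cast h1.trans h2
        have hpmem : p ∈ d.primeFactors :=
          Nat.mem_primeFactors.mpr ⟨hp, hpd, x.den_ne_zero⟩
        have : p ^ (k / (p-1)) ∣ M := Finset.dvd_prod_of_mem _ hpmem
        exact Dvd.dvd.mul_right ((pow_dvd_pow p hvle).trans this) _
      · -- p does not divide d
        haveI : NeZero (p ^ v) := ⟨pow_ne_zero v hp.pos.ne'⟩
        have hcop : Nat.Coprime d (p ^ v) :=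
          Nat.Coprime.pow_right v ((Nat.Prime.coprime_iff_not_dvd hp).mpr hpd).symm
        have hu : IsUnit ((d : ℕ) : ZMod (p ^ v)) :=
          (ZMod.isUnit_iff_coprime d (p ^ v)).mpr hcop
        obtain ⟨u, hu'⟩ := hu.exists_right_inv
        obtain ⟨a, ha⟩ := ZMod.intCast_surjective (u * ((x.num : ℤ) : ZMod (p ^ v)))
        have hfd : (k.factorial : ℤ) ∣ ∏ i ∈ range k, (a - i) := factorial_dvd_descProd a k
        have hpvk : ((p : ℤ)) ^ v ∣ (k.factorial : ℤ) := by exact_mod_cast hpvfac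
        have hcast : ((∏ i ∈ range k, (a - i) : ℤ) : ZMod (p ^ v)) = 0 := by
          rw [ZMod.intCast_zmod_eq_zero_iff_dvd]
          exact_mod_cast hpvk.trans hfd
        have hNzero : ((N : ℤ) : ZMod (p ^ v)) = 0 := by
          rw [hN]
          push_cast
          calc ∏ i ∈ range k, (((x.num : ℤ) : ZMod (p ^ v)) - (i : ZMod (p ^ v)) * (d : ZMod (p ^ v)))
              = ∏ i ∈ range k, ((d : ZMod (p ^ v)) * (((a : ℤ) : ZMod (p ^ v)) - (i : ZMod (p ^ v)))) := by
                refine Finset.prod_congr rfl fun i _ => ?_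
                rw [ha, mul_sub, ← mul_assoc, hu', one_mul]
                ring
            _ = (d : ZMod (p ^ v)) ^ k * ∏ i ∈ range k, (((a : ℤ) : ZMod (p ^ v)) - (i : ZMod (p ^ v))) := by
                rw [Finset.prod_mul_distrib, Finset.prod_const, Finset.card_range]
            _ = (d : ZMod (p ^ v)) ^ k * ((∏ i ∈ range k, (a - i) : ℤ) : ZMod (p ^ v)) := by
                push_cast; ring_nf
            _ = 0 := by rw [hcast, mul_zero]
        have hdvdN : ((p ^ v : ℕ) : ℤ) ∣ N := by
          rw [← ZMod.intCast_zmod_eq_zero_iff_dvd]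
          exact hNzero
        have : p ^ v ∣ N.natAbs := Int.natCast_dvd.mp (by exact_mod_cast hdvdN)
        exact Dvd.dvd.mul_left this M
    rw [← Int.dvd_natAbs]
    have habs : ((M : ℤ) * N).natAbs = M * N.natAbs := by
      rw [Int.natAbs_mul, Int.natAbs_natCast]
    rw [habs]
    exact_mod_cast hnat
  obtain ⟨z, hz⟩ := hdvd
  refine ⟨z, ?_⟩
  have hk0 : (k.factorial : ℚ) ≠ 0 := by exact_mod_cast k.factorial_ne_zero
  have hzq : ((M : ℤ) * N : ℚ) = (k.factorial : ℚ) * (z : ℚ) := by exact_mod_cast congrArg (Int.cast : ℤ → ℚ) hz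
  show ((d ^ k * M : ℕ) : ℚ) * ((∏ i ∈ range k, (x - (i:ℚ))) / (k.factorial : ℚ)) = (z : ℚ)
  push_cast
  push_cast at hzq
  rw [mul_div_assoc' _ _ _, div_eq_iff hk0]
  linear_combination ((M:ℕ):ℚ) * hprod + hzq

lemma mu_congr {a b : ℚ} (h : a.den = b.den) (m : ℕ) : mu a m = mu b m := by
  unfold mu; rw [h]

lemma mu_mul_dvd (a : ℚ) (i j : ℕ) : mu a i * mu a j ∣ mu a (i + j) := by
  unfold mu
  rw [mul_mul_mul_comm, ← pow_add, ← Finset.prod_mul_distrib]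
  apply mul_dvd_mul dvd_rfl
  apply Finset.prod_dvd_prod_of_dvd
  intro p hp
  rw [← pow_add]
  apply pow_dvd_pow
  have hp1 : 0 < p - 1 := Nat.sub_pos_of_lt (Nat.prime_of_mem_primeFactors hp).one_lt
  rw [Nat.le_div_iff_mul_le hp1, add_mul]
  exact Nat.add_le_add (Nat.div_mul_le_self _ _) (Nat.div_mul_le_self _ _)

lemma mu_dvd_mono (a : ℚ) {i j : ℕ} (h : i ≤ j) : mu a i ∣ mu a j := by
  unfold mu
  apply mul_dvd_mul (pow_dvd_pow _ h)
  apply Finset.prod_dvd_prod_of_dvd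
  intro p _
  exact pow_dvd_pow _ (Nat.div_le_div_right h)

lemma pochQ_eq (a : ℚ) (m : ℕ) :
    pochQ (a + 1) m = (m.factorial : ℚ) * gbinomQ (a + (m:ℚ)) m := by
  have hm0 : (m.factorial : ℚ) ≠ 0 := by exact_mod_cast m.factorial_ne_zero
  unfold pochQ gbinomQ
  rw [mul_div_cancel₀ _ hm0]
  calc ∏ j ∈ range m, (a + 1 + (j:ℚ))
      = ∏ j ∈ range m, (a + (m:ℚ) - ((m - 1 - j : ℕ):ℚ)) := by
        refine Finset.prod_congr rfl fun j hj => ?_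
        have hj' : j ≤ m - 1 := Nat.le_sub_one_of_lt (Finset.mem_range.mp hj)
        have hm : 1 ≤ m := Nat.one_le_iff_ne_zero.mpr (by
          intro h; subst h; exact absurd (Finset.mem_range.mp hj) (by omega))
        rw [Nat.cast_sub hj', Nat.cast_sub hm]
        push_cast
        ring
    _ = ∏ i ∈ range m, (a + (m:ℚ) - (i:ℚ)) :=
        Finset.prod_range_reflect (fun i => a + (m:ℚ) - (i:ℚ)) m

theorem stmt_6 (a₁ a₂ : ℚ) (ha₁ : -1 < a₁) (ha₂ : -1 < a₂)
    (hZ : ¬ ∃ m : ℤ, a₂ - a₁ = m) (n : ℕ) :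
    ∃ P : Polynomial ℤ, ∀ b : ℚ,
      (mu (a₂ - a₁) n : ℚ) * (mu a₂ (2 * n) : ℚ) *
          ∑ k ∈ Finset.range (n + 1),
            gbinomQ ((n : ℚ) + a₁ - a₂) k * gbinomQ ((n : ℚ) + a₂ - a₁) (n - k) *
              pochQ (a₂ + 1) (n + k) * b ^ (n - k)
        = (n.factorial : ℚ) * Polynomial.aeval b P := by
  have hden1 : ((n:ℚ) + a₁ - a₂).den = (a₂ - a₁).den := by
    have h : (n:ℚ) + a₁ - a₂ = ((n:ℤ):ℚ) + (a₁ - a₂) := by push_cast; ring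
    rw [h, den_intCast_add, show a₁ - a₂ = -(a₂ - a₁) by ring, Rat.den_neg_eq_den]
  have hden2 : ((n:ℚ) + a₂ - a₁).den = (a₂ - a₁).den := by
    have h : (n:ℚ) + a₂ - a₁ = ((n:ℤ):ℚ) + (a₂ - a₁) := by push_cast; ring
    rw [h, den_intCast_add]
  have hden3 : ∀ m : ℕ, (a₂ + (m:ℚ)).den = a₂.den := by
    intro m
    have h : a₂ + (m:ℚ) = ((m:ℤ):ℚ) + a₂ := by push_cast; ring
    rw [h, den_intCast_add]
  have hterm : ∀ k : ℕ, ∃ e : ℤ, k ≤ n →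
      (mu (a₂ - a₁) n : ℚ) * (mu a₂ (2*n) : ℚ) *
        (gbinomQ ((n:ℚ) + a₁ - a₂) k * gbinomQ ((n:ℚ) + a₂ - a₁) (n-k) *
          pochQ (a₂+1) (n+k))
      = (n.factorial : ℚ) * (e : ℚ) := by
    intro k
    by_cases hk : k ≤ n
    swap
    · exact ⟨0, fun h => absurd h hk⟩
    obtain ⟨z1, hz1⟩ := key ((n:ℚ) + a₁ - a₂) k
    obtain ⟨z2, hz2⟩ := key ((n:ℚ) + a₂ - a₁) (n - k)
    obtain ⟨z3, hz3⟩ := key (a₂ + ((n + k : ℕ):ℚ)) (n + k)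
    rw [mu_congr hden1 k] at hz1
    rw [mu_congr hden2 (n-k)] at hz2
    rw [mu_congr (hden3 (n+k)) (n+k)] at hz3
    obtain ⟨t1, ht1⟩ : mu (a₂ - a₁) k * mu (a₂ - a₁) (n-k) ∣ mu (a₂ - a₁) n := by
      have h := mu_mul_dvd (a₂ - a₁) k (n-k)
      rwa [Nat.add_sub_cancel' hk] at h
    obtain ⟨t2, ht2⟩ : mu a₂ (n+k) ∣ mu a₂ (2*n) := mu_dvd_mono a₂ (by omega)
    obtain ⟨t3, ht3⟩ : n.factorial ∣ (n+k).factorial :=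
      Nat.factorial_dvd_factorial (by omega)
    refine ⟨z1 * z2 * z3 * t1 * t2 * t3, fun _ => ?_⟩
    set G3 : ℚ := gbinomQ (a₂ + ((n + k : ℕ):ℚ)) (n+k) with hG3
    have hp : pochQ (a₂ + 1) (n+k)
        = (((n+k).factorial : ℕ) : ℚ) * G3 := by
      exact_mod_cast pochQ_eq a₂ (n+k)
    rw [hp, ht1, ht2, ht3]
    push_cast
    calc ((mu (a₂-a₁) k : ℚ) * (mu (a₂-a₁) (n-k) :ℚ) * (t1:ℚ)) * ((mu a₂ (n+k):ℚ) * (t2:ℚ)) *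
          (gbinomQ ((n:ℚ) + a₁ - a₂) k * gbinomQ ((n:ℚ) + a₂ - a₁) (n-k) *
            ((n.factorial : ℚ) * (t3:ℚ) * G3))
        = ((mu (a₂-a₁) k : ℚ) * gbinomQ ((n:ℚ) + a₁ - a₂) k) *
            ((mu (a₂-a₁) (n-k) : ℚ) * gbinomQ ((n:ℚ) + a₂ - a₁) (n-k)) *
            ((mu a₂ (n+k) : ℚ) * G3) *
            (t1:ℚ) * (t2:ℚ) * ((n.factorial : ℚ) * (t3:ℚ)) := by ring
      _ = (z1:ℚ) * (z2:ℚ) * (z3:ℚ) * (t1:ℚ) * (t2:ℚ) * ((n.factorial : ℚ) * (t3:ℚ)) := by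
          rw [hz1, hz2, hz3]
      _ = (n.factorial : ℚ) * ((z1:ℚ) * (z2:ℚ) * (z3:ℚ) * (t1:ℚ) * (t2:ℚ) * (t3:ℚ)) := by ring
  choose e he using hterm
  refine ⟨∑ k ∈ Finset.range (n+1), Polynomial.C (e k) * Polynomial.X ^ (n - k), fun b => ?_⟩
  rw [map_sum, Finset.mul_sum, Finset.mul_sum]
  refine Finset.sum_congr rfl fun k hk => ?_
  have hk' : k ≤ n := Nat.lt_succ_iff.mp (Finset.mem_range.mp hk)
  have hkey := he k hk'
  rw [map_mul, Polynomial.aeval_C, map_pow, Polynomial.aeval_X]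
  have halg : (algebraMap ℤ ℚ) (e k) = ((e k : ℤ) : ℚ) := by simp
  rw [halg]
  calc (mu (a₂ - a₁) n : ℚ) * (mu a₂ (2*n) : ℚ) *
        (gbinomQ ((n:ℚ) + a₁ - a₂) k * gbinomQ ((n:ℚ) + a₂ - a₁) (n-k) *
          pochQ (a₂+1) (n+k) * b ^ (n-k))
      = ((mu (a₂ - a₁) n : ℚ) * (mu a₂ (2*n) : ℚ) *
          (gbinomQ ((n:ℚ) + a₁ - a₂) k * gbinomQ ((n:ℚ) + a₂ - a₁) (n-k) *
            pochQ (a₂+1) (n+k))) * b ^ (n-k) := by ring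
    _ = ((n.factorial : ℚ) * (e k : ℚ)) * b ^ (n-k) := by rw [hkey]
    _ = (n.factorial : ℚ) * ((e k : ℚ) * b ^ (n-k)) := by ring
end

section
/- For 0 < x < 1 and reals a_1, a_2 with a_2 - a_1 ∉ ℤ, one has (1 - x^{a_1-a_2})/((a_1-a_2)(1-x)) = ∫_0^∞ du / [(1+ux)^{1+a_2-a_1} (1+u)^{1+a_1-a_2}]. -/
open Real MeasureTheory Filter Set Topology

theorem stmt_10 (a₁ a₂ x : ℝ) (hx0 : 0 < x) (hx1 : x < 1)
    (hZ : ¬ ∃ m : ℤ, a₂ - a₁ = m) :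
    (1 - x ^ (a₁ - a₂)) / ((a₁ - a₂) * (1 - x))
      = ∫ u in Set.Ioi (0 : ℝ),
          ((1 + u * x) ^ (1 + a₂ - a₁) * (1 + u) ^ (1 + a₁ - a₂))⁻¹ := by
  set b := a₁ - a₂ with hb
  have hbne : b ≠ 0 := by
    intro h
    exact hZ ⟨0, by push_cast; linarith [sub_eq_zero.mp h]⟩
  have hx1' : (1:ℝ) - x ≠ 0 := by linarith
  have hc : b * (x - 1) ≠ 0 := mul_ne_zero hbne (by linarith)
  set g : ℝ → ℝ := fun u => ((1 + u * x) / (1 + u)) ^ b / (b * (x - 1)) with hg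
  have ea : 1 + a₂ - a₁ = 1 - b := by rw [hb]; ring
  have eb : 1 + a₁ - a₂ = 1 + b := by rw [hb]; ring
  rw [ea, eb]
  clear_value b
  clear hb
  have key : ∀ u ∈ Ioi (0:ℝ), HasDerivAt g
      (((1 + u * x) ^ ((1:ℝ) - b) * (1 + u) ^ ((1:ℝ) + b))⁻¹) u := by
    intro u hu
    have hu0 : (0:ℝ) < u := hu
    have hP : (0:ℝ) < 1 + u * x := by positivity
    have hQ : (0:ℝ) < 1 + u := by positivity
    have h1 : HasDerivAt (fun u : ℝ => 1 + u * x) x u := by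
      simpa using ((hasDerivAt_id u).mul_const x).const_add 1
    have h2 : HasDerivAt (fun u : ℝ => 1 + u) 1 u := by
      simpa using (hasDerivAt_id u).const_add 1
    have hdiv : HasDerivAt (fun u : ℝ => (1 + u * x) / (1 + u)) ((x * (1 + u) - (1 + u * x) * 1) / (1 + u) ^ 2) u := h1.div h2 hQ.ne'
    have hr := (hdiv.rpow_const (p := b) (Or.inl (div_pos hP hQ).ne')).div_const (b * (x - 1))
    convert hr using 1
    all_goals try rfl
    have hnum : x * (1 + u) - (1 + u * x) * 1 = x - 1 := by ring
    rw [hnum, Real.div_rpow hP.le hQ.le]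
    have key1 : (1 + u * x) ^ (b - 1) * (1 + u * x) ^ (1 - b) = 1 := by
      rw [← Real.rpow_add hP]; norm_num
    have key2 : (1 + u) ^ (1 + b) = (1 + u) ^ (b - 1) * (1 + u) ^ (2:ℕ) := by
      rw [← Real.rpow_natCast (1 + u) 2, ← Real.rpow_add hQ]
      congr 1; push_cast; ring
    have e1 : (1 + u * x) ^ ((1:ℝ) - b) ≠ 0 := (Real.rpow_pos_of_pos hP _).ne'
    have e2 : ((1 + u) : ℝ) ^ (b - 1) ≠ 0 := (Real.rpow_pos_of_pos hQ _).ne'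
    have e3 : ((1 + u) : ℝ) ^ (2:ℕ) ≠ 0 := by positivity
    rw [key2]
    have hrhs : (x - 1) / (1 + u) ^ 2 * b * ((1 + u * x) ^ (b - 1) / (1 + u) ^ (b - 1))
        / (b * (x - 1)) = (1 + u * x) ^ (b - 1) / ((1 + u) ^ (b - 1) * (1 + u) ^ (2:ℕ)) := by
      have hx1'' : x - 1 ≠ 0 := by linarith
      field_simp
    rw [hrhs, inv_eq_one_div, div_eq_div_iff (by positivity) (by positivity)]
    linear_combination (-((1 + u) ^ (b - 1) * ((1 + u):ℝ) ^ (2:ℕ))) * key1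
  have hg0 : g 0 = 1 / (b * (x - 1)) := by simp [hg]
  have hlim : Tendsto g atTop (𝓝 (x ^ b / (b * (x - 1)))) := by
    have h0 : Tendsto (fun u : ℝ => (1 + u * x) / (1 + u)) atTop (𝓝 x) := by
      have h : Tendsto (fun u : ℝ => (u⁻¹ + x) / (u⁻¹ + 1)) atTop (𝓝 x) := by
        have := (tendsto_inv_atTop_zero.add (tendsto_const_nhds (x := x))).div
          (tendsto_inv_atTop_zero.add (tendsto_const_nhds (x := (1:ℝ)))) (by norm_num)
        simpa using (show Tendsto (fun u : ℝ => (u⁻¹ + x) / (u⁻¹ + 1)) atTop _ from this)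
      refine h.congr' ?_
      filter_upwards [eventually_gt_atTop (0:ℝ)] with u hu
      field_simp
    have hc2 : ContinuousAt (fun y : ℝ => y ^ b) x :=
      Real.continuousAt_rpow_const x b (Or.inl hx0.ne')
    exact ((hc2.tendsto.comp h0).div_const _)
  have hcont : ContinuousWithinAt g (Ici 0) 0 := by
    apply ContinuousAt.continuousWithinAt
    have hφ : ContinuousAt (fun u : ℝ => (1 + u * x) / (1 + u)) 0 := by
      apply ContinuousAt.div (by fun_prop) (by fun_prop); norm_num
    exact ((hφ.rpow_const (Or.inl (by norm_num))).div_const _)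
  have hpos : ∀ u ∈ Ioi (0:ℝ),
      0 ≤ ((1 + u * x) ^ ((1:ℝ) - b) * (1 + u) ^ ((1:ℝ) + b))⁻¹ := by
    intro u hu
    have hu0 : (0:ℝ) < u := hu
    positivity
  rw [integral_Ioi_of_hasDerivAt_of_nonneg hcont key hpos hlim, hg0]
  rw [div_sub_div_same, div_eq_div_iff (mul_ne_zero hbne hx1') hc]
  ring
end

section
/- For a real number α with n - α not a positive integer, and any real β, the n-th derivative of x^α (1-x)^β equals (α-n+1)_n x^{α-n} (1-x)^{β-n} · ₂F₁(-n, α+1+β-n; α+1-n; x), where the ₂F₁ is the terminating hypergeometric sum Σ_{k=0}^n (-n)_k (α+1+β-n)_k / ((α+1-n)_k k!) x^k. -/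
open Real

/-- Pochhammer symbol `(a)_k` for real `a`. -/
noncomputable def pochR (a : ℝ) (k : ℕ) : ℝ := ∏ j ∈ Finset.range k, (a + j)

lemma pochR_zero (a : ℝ) : pochR a 0 = 1 := by simp [pochR]

lemma pochR_succ (a : ℝ) (k : ℕ) : pochR a (k+1) = pochR a k * (a + k) :=
  Finset.prod_range_succ _ _

lemma pochR_succ' (a : ℝ) (k : ℕ) : pochR a (k+1) = a * pochR (a+1) k := by
  unfold pochR
  rw [Finset.prod_range_succ']
  push_cast
  rw [mul_comm]
  congr 1
  · norm_num
  · exact Finset.prod_congr rfl fun j _ => by ring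

noncomputable def Cf (α β : ℝ) (m k : ℕ) : ℝ :=
  pochR (-(m:ℝ)) k * pochR (α + 1 + β - m) k / (pochR (α + 1 - m) k * k.factorial)

lemma Cf_zero (α β : ℝ) (m : ℕ) : Cf α β m 0 = 1 := by simp [Cf, pochR]

lemma Cf_top (α β : ℝ) (n : ℕ) : Cf α β n (n+1) = 0 := by
  have h : pochR (-(n:ℝ)) (n+1) = 0 :=
    Finset.prod_eq_zero (Finset.self_mem_range_succ n) (by simp)
  simp [Cf, h]

lemma hne (n : ℕ) (α : ℝ) (h : ∀ m : ℕ, 0 < m → ((n:ℝ)+1) - α ≠ m) :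
    ∀ i : ℕ, i ≤ n + 1 → α - n + i ≠ 0 := by
  intro i _ h0
  apply h (i+1) (Nat.succ_pos i)
  push_cast
  linarith

lemma pochR_den_ne (n j : ℕ) (α : ℝ) (hj : j ≤ n)
    (h : ∀ m : ℕ, 0 < m → ((n:ℝ)+1) - α ≠ m) :
    pochR (α + 1 - n) j ≠ 0 := by
  unfold pochR
  rw [Finset.prod_ne_zero_iff]
  intro i hi
  have hi' : i + 1 ≤ n + 1 := by
    have := Finset.mem_range.mp hi; omega
  have := hne n α h (i+1) hi'
  intro h0; apply this; push_cast at h0 ⊢; linarith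

lemma coeff_step (α β : ℝ) (n j : ℕ) (hj : j ≤ n)
    (h : ∀ m : ℕ, 0 < m → ((n:ℝ)+1) - α ≠ m) :
    (α - n + (j+1)) * Cf α β n (j+1) - (α + β - 2*n + j) * Cf α β n j
      = (α - n) * Cf α β (n+1) (j+1) := by
  have hd : pochR (α + 1 - n) j ≠ 0 := pochR_den_ne n j α hj h
  have h1 : α + 1 - n + j ≠ 0 := by
    have := hne n α h (j+1) (by omega)
    intro h0; apply this; push_cast at h0 ⊢; linarith
  have h2 : α - (n:ℝ) ≠ 0 := by
    have := hne n α h 0 (by omega)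
    intro h0; apply this; push_cast at h0 ⊢; linarith
  have hf : (j.factorial : ℝ) ≠ 0 := Nat.cast_ne_zero.mpr j.factorial_ne_zero
  have hj1 : ((j:ℝ)+1) ≠ 0 := by positivity
  have e1 : pochR (-((n:ℝ)+1)) (j+1) = (-(n:ℝ)-1) * pochR (-(n:ℝ)) j := by
    rw [show (-((n:ℝ)+1)) = (-(n:ℝ)-1) by ring, pochR_succ',
      show (-(n:ℝ)-1)+1 = -(n:ℝ) by ring]
  have e2 : pochR (α+1+β-((n:ℝ)+1)) (j+1) = (α+β-n) * pochR (α+1+β-n) j := by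
    rw [show (α+1+β-((n:ℝ)+1)) = (α+β-n) by ring, pochR_succ',
      show (α+β-(n:ℝ))+1 = α+1+β-n by ring]
  have e3 : pochR (α+1-((n:ℝ)+1)) (j+1) = (α-n) * pochR (α+1-n) j := by
    rw [show (α+1-((n:ℝ)+1)) = (α-n) by ring, pochR_succ',
      show (α-(n:ℝ))+1 = α+1-n by ring]
  have e4 := pochR_succ (-(n:ℝ)) j
  have e5 := pochR_succ (α+1+β-n) j
  have e6 := pochR_succ (α+1-n) j
  have e7 : ((j+1).factorial : ℝ) = ((j:ℝ)+1) * j.factorial := by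
    rw [Nat.factorial_succ]; push_cast; ring
  unfold Cf
  push_cast
  rw [e1, e2, e3, e4, e5, e6, e7]
  field_simp
  ring

lemma bracket (α β x : ℝ) (n : ℕ)
    (h : ∀ m : ℕ, 0 < m → ((n:ℝ)+1) - α ≠ m) :
    (α-(n:ℝ)) * ((1-x) * (∑ k ∈ Finset.range (n+1), Cf α β n k * x^k))
      - (β-n) * (x * ∑ k ∈ Finset.range (n+1), Cf α β n k * x^k)
      + (1-x) * x * (∑ k ∈ Finset.range (n+1), Cf α β n k * ((k:ℝ) * x^(k-1)))
    = (α-n) * ∑ k ∈ Finset.range (n+2), Cf α β (n+1) k * x^k := by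
  -- rewrite LHS as a single sum of per-k terms
  have lhs_eq :
      (α-(n:ℝ)) * ((1-x) * (∑ k ∈ Finset.range (n+1), Cf α β n k * x^k))
      - (β-n) * (x * ∑ k ∈ Finset.range (n+1), Cf α β n k * x^k)
      + (1-x) * x * (∑ k ∈ Finset.range (n+1), Cf α β n k * ((k:ℝ) * x^(k-1)))
      = ∑ k ∈ Finset.range (n+1),
          ((α - n + k) * Cf α β n k * x^k - (α + β - 2*n + k) * Cf α β n k * x^(k+1)) := by
    rw [Finset.mul_sum, Finset.mul_sum, Finset.mul_sum, Finset.mul_sum, Finset.mul_sum,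
      ← Finset.sum_sub_distrib, ← Finset.sum_add_distrib]
    apply Finset.sum_congr rfl
    intro k _
    cases k with
    | zero => simp; try ring
    | succ m =>
      have : x ^ (m+1-1) = x ^ m := by norm_num
      rw [this]
      push_cast
      ring_nf
      try rw [pow_succ]
      try ring
  rw [lhs_eq, Finset.sum_sub_distrib]
  -- first sum: peel off k = 0, extend to n+1
  have A : (∑ k ∈ Finset.range (n+1), (α - (n:ℝ) + k) * Cf α β n k * x^k)
      = (α - n) + ∑ j ∈ Finset.range (n+1),
          (α - n + (j+1)) * Cf α β n (j+1) * x^(j+1) := by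
    rw [Finset.sum_range_succ' (fun k => (α - (n:ℝ) + k) * Cf α β n k * x^k) n]
    rw [Finset.sum_range_succ (fun j => (α - (n:ℝ) + (j+1)) * Cf α β n (j+1) * x^(j+1)) n]
    rw [Cf_top, Cf_zero]
    push_cast
    ring
  -- RHS
  have B : (α-(n:ℝ)) * ∑ k ∈ Finset.range (n+2), Cf α β (n+1) k * x^k
      = (α - n) + ∑ j ∈ Finset.range (n+1), (α-(n:ℝ)) * (Cf α β (n+1) (j+1) * x^(j+1)) := by
    rw [Finset.sum_range_succ' (fun k => Cf α β (n+1) k * x^k) (n+1), Cf_zero, mul_add,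
      Finset.mul_sum]
    simp only [pow_zero, mul_one]
    ring
  rw [A, B, add_sub_assoc]
  congr 1
  rw [← Finset.sum_sub_distrib]
  apply Finset.sum_congr rfl
  intro j hj
  have hj' : j ≤ n := by have := Finset.mem_range.mp hj; omega
  have := coeff_step α β n j hj' h
  push_cast at this ⊢
  linear_combination x^(j+1) * this

theorem stmt_11 (n : ℕ) (α β x : ℝ) (hx0 : 0 < x) (hx1 : x < 1)
    (hα : ¬ ∃ m : ℕ, 0 < m ∧ (n : ℝ) - α = m) :
    iteratedDeriv n (fun y : ℝ => y ^ α * (1 - y) ^ β) x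
      = pochR (α - n + 1) n * x ^ (α - n) * (1 - x) ^ (β - n) *
          ∑ k ∈ Finset.range (n + 1),
            pochR (-(n : ℝ)) k * pochR (α + 1 + β - n) k /
              (pochR (α + 1 - n) k * (k.factorial : ℝ)) * x ^ k := by
  push_neg at hα
  have key : ∀ N : ℕ, (∀ m : ℕ, 0 < m → (N:ℝ) - α ≠ m) → ∀ y : ℝ, 0 < y → y < 1 →
      iteratedDeriv N (fun y : ℝ => y ^ α * (1 - y) ^ β) y
        = pochR (α - N + 1) N * y ^ (α - N) * (1 - y) ^ (β - N) *
            ∑ k ∈ Finset.range (N + 1), Cf α β N k * y ^ k := by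
    intro N
    induction N with
    | zero =>
      intro _ y hy0 hy1
      simp [iteratedDeriv_zero, Cf_zero, pochR_zero]
    | succ n ih =>
      intro hN y hy0 hy1
      have hyne : y ≠ 0 := hy0.ne'
      have h1yne : (1:ℝ) - y ≠ 0 := by linarith
      have hn : ∀ m : ℕ, 0 < m → (n:ℝ) - α ≠ m := by
        intro m hm h0
        exact hN (m+1) (by omega) (by push_cast; linarith)
      have hN' : ∀ m : ℕ, 0 < m → ((n:ℝ)+1) - α ≠ m := by
        intro m hm
        have := hN m hm; push_cast at this ⊢; convert this using 2
      rw [iteratedDeriv_succ]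
      have heq : deriv (iteratedDeriv n (fun y : ℝ => y ^ α * (1 - y) ^ β)) y
          = deriv (fun z : ℝ => pochR (α - n + 1) n * z ^ (α - n) * (1 - z) ^ (β - n) *
              ∑ k ∈ Finset.range (n + 1), Cf α β n k * z ^ k) y := by
        apply Filter.EventuallyEq.deriv_eq
        filter_upwards [Ioo_mem_nhds hy0 hy1] with z hz
        exact ih hn z hz.1 hz.2
      rw [heq]
      set K := pochR (α - n + 1) n with hK
      set P : ℝ → ℝ := fun z => ∑ k ∈ Finset.range (n + 1), Cf α β n k * z ^ k with hP
      have hd1 : HasDerivAt (fun z : ℝ => z ^ (α - n)) ((α - n) * y ^ (α - n - 1)) y :=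
        Real.hasDerivAt_rpow_const (Or.inl hyne)
      have hd2 : HasDerivAt (fun z : ℝ => (1 - z) ^ (β - n))
          ((-1) * (β - n) * (1 - y) ^ (β - n - 1)) y := by
        exact (((hasDerivAt_id y).const_sub 1).rpow_const (Or.inl h1yne))
      have hd3 : HasDerivAt P (∑ k ∈ Finset.range (n + 1), Cf α β n k * ((k:ℝ) * y ^ (k-1))) y := by
        apply HasDerivAt.fun_sum
        intro k _
        exact (hasDerivAt_pow k y).const_mul (Cf α β n k)
      have hD : HasDerivAt (fun z : ℝ => K * z ^ (α - n) * (1 - z) ^ (β - n) * P z)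
          (((K * ((α - n) * y ^ (α - n - 1))) * (1 - y) ^ (β - n)
            + (K * y ^ (α - n)) * ((-1) * (β - n) * (1 - y) ^ (β - n - 1))) * P y
            + (K * y ^ (α - n) * (1 - y) ^ (β - n))
              * ∑ k ∈ Finset.range (n + 1), Cf α β n k * ((k:ℝ) * y ^ (k-1))) y := by
        exact ((hd1.const_mul K).mul hd2).mul hd3
      rw [hD.deriv]
      -- algebra
      have hy2 : y ^ (α - n) = y ^ (α - n - 1) * y := by
        rw [← Real.rpow_add_one hyne]; congr 1; ring
      have h1y2 : (1 - y) ^ (β - n) = (1 - y) ^ (β - n - 1) * (1 - y) := by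
        rw [← Real.rpow_add_one h1yne]; congr 1; ring
      have hbr := bracket α β y n hN'
      have hpre : pochR (α - ((n:ℝ)+1) + 1) (n+1) = (α - n) * K := by
        rw [show (α - ((n:ℝ)+1) + 1) = α - n by ring, pochR_succ',
          show (α - (n:ℝ)) + 1 = α - n + 1 by ring]
      have hcast1 : α - ((n+1:ℕ):ℝ) = α - n - 1 := by push_cast; ring
      have hcast2 : β - ((n+1:ℕ):ℝ) = β - n - 1 := by push_cast; ring
      have hcast3 : α - ((n+1:ℕ):ℝ) + 1 = α - ((n:ℝ)+1) + 1 := by push_cast; ring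
      rw [hcast3, hpre, hcast1, hcast2]
      calc (((K * ((α - n) * y ^ (α - n - 1))) * (1 - y) ^ (β - n)
            + (K * y ^ (α - n)) * ((-1) * (β - n) * (1 - y) ^ (β - n - 1))) * P y
            + (K * y ^ (α - n) * (1 - y) ^ (β - n))
              * ∑ k ∈ Finset.range (n + 1), Cf α β n k * ((k:ℝ) * y ^ (k-1)))
          = K * y ^ (α - n - 1) * (1 - y) ^ (β - n - 1) *
              ((α-(n:ℝ)) * ((1-y) * P y) - (β-n) * (y * P y)
                + (1-y) * y * (∑ k ∈ Finset.range (n+1), Cf α β n k * ((k:ℝ) * y^(k-1)))) := by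
            rw [hy2, h1y2]; ring
        _ = K * y ^ (α - n - 1) * (1 - y) ^ (β - n - 1) *
              ((α-(n:ℝ)) * ∑ k ∈ Finset.range (n+2), Cf α β (n+1) k * y^k) := by rw [hP, hbr]
        _ = (α - (n:ℝ)) * K * y ^ (α - n - 1) * (1 - y) ^ (β - n - 1) *
              ∑ k ∈ Finset.range (n+1+1), Cf α β (n+1) k * y^k := by ring
  exact key n hα x hx0 hx1
end

section
/- The multiple Jacobi-Laguerre polynomial is symmetric in its two parameters: Q_n^{(a_1,a_2,b)}(x) = Q_n^{(a_2,a_1,b)}(x), where Q_n^{(a_1,a_2,b)}(x) = (1/n!²) w_1(x)^{-1} dⁿ/dxⁿ [w_1(x) xⁿ w_2(x)^{-1} dⁿ/dxⁿ (w_2(x) xⁿ (1-x)^{2n})] with w_j(x) = x^{a_j}(1-x)e^{-bx}. -/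
open Real

/-- Weight `w(x) = x^a (1-x) e^{-bx}`. -/
noncomputable def weight (a b x : ℝ) : ℝ := x ^ a * (1 - x) * Real.exp (-b * x)

/-- The multiple Jacobi-Laguerre polynomial `Q_n^{(a₁,a₂,b)}`. -/
noncomputable def JacobiLaguerre (a₁ a₂ b : ℝ) (n : ℕ) (x : ℝ) : ℝ :=
  (1 / ((n.factorial : ℝ)) ^ 2) * (weight a₁ b x)⁻¹ *
    iteratedDeriv n (fun y =>
      weight a₁ b y * y ^ n * (weight a₂ b y)⁻¹ *
        iteratedDeriv n (fun z => weight a₂ b z * z ^ n * (1 - z) ^ (2 * n)) y) x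

open Finset


/-- Real falling factorial. -/
noncomputable def ff (c : ℝ) (k : ℕ) : ℝ := ∏ i ∈ Finset.range k, (c - i)

lemma ff_zero (c : ℝ) : ff c 0 = 1 := by simp [ff]

lemma ff_succ (c : ℝ) (k : ℕ) : ff c (k + 1) = ff c k * (c - k) :=
  Finset.prod_range_succ _ _

lemma ff_nat (m r : ℕ) : ff (m : ℝ) r = ((m.descFactorial r : ℕ) : ℝ) := by
  induction r with
  | zero => simp [ff]
  | succ r ih =>
    rw [ff_succ, ih, Nat.descFactorial_succ, Nat.cast_mul]
    rcases le_or_gt r m with h | h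
    · rw [Nat.cast_sub h]; ring
    · rw [Nat.descFactorial_eq_zero_iff_lt.2 h]; simp

lemma ff_add (a c : ℝ) : ∀ r : ℕ, ff (a + c) r =
    ∑ i ∈ Finset.range (r + 1), (r.choose i : ℝ) * ff a i * ff c (r - i) := by
  intro r
  induction r with
  | zero => simp [ff]
  | succ r ih =>
    rw [ff_succ, ih, Finset.sum_mul]
    have h1 : ∀ i ∈ Finset.range (r + 1),
        (r.choose i : ℝ) * ff a i * ff c (r - i) * (a + c - (r : ℕ))
          = (r.choose i : ℝ) * (ff a (i + 1) * ff c (r - i))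
            + (r.choose i : ℝ) * (ff a i * ff c ((r - i) + 1)) := by
      intro i hi
      have hi' : i ≤ r := by simpa [Nat.lt_succ_iff] using hi
      have he : (a + c - (r : ℕ)) = (a - i) + (c - ((r - i : ℕ) : ℝ)) := by
        rw [Nat.cast_sub hi']; push_cast; ring
      rw [he, ff_succ, ff_succ]; ring
    rw [Finset.sum_congr rfl h1, Finset.sum_add_distrib]
    -- RHS
    rw [Finset.sum_range_succ' (fun i => ((r+1).choose i : ℝ) * ff a i * ff c (r + 1 - i)) (r+1)]
    have h2 : ∀ i ∈ Finset.range (r + 1),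
        (((r+1).choose (i+1) : ℕ) : ℝ) * ff a (i+1) * ff c (r + 1 - (i+1))
          = (r.choose i : ℝ) * (ff a (i+1) * ff c (r - i))
            + (r.choose (i+1) : ℝ) * (ff a (i+1) * ff c (r - i)) := by
      intro i hi
      have : r + 1 - (i + 1) = r - i := by omega
      rw [this, Nat.choose_succ_succ', Nat.cast_add]; ring
    rw [Finset.sum_congr rfl h2, Finset.sum_add_distrib]
    have h3 : ∑ i ∈ Finset.range (r + 1), (r.choose i : ℝ) * (ff a i * ff c ((r - i) + 1))
        = (∑ i ∈ Finset.range (r + 1), (r.choose (i+1) : ℝ) * (ff a (i+1) * ff c (r - i)))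
          + (((r+1).choose 0 : ℕ) : ℝ) * ff a 0 * ff c (r + 1 - 0) := by
      rw [Finset.sum_range_succ' (fun i => (r.choose i : ℝ) * (ff a i * ff c ((r - i) + 1))) r]
      rw [Finset.sum_range_succ (fun i => (r.choose (i+1) : ℝ) * (ff a (i+1) * ff c (r - i))) r]
      have hlast : (r.choose (r+1) : ℝ) * (ff a (r+1) * ff c (r - r)) = 0 := by
        rw [Nat.choose_eq_zero_of_lt (by omega)]; simp
      rw [hlast, add_zero]
      congr 1
      · refine Finset.sum_congr rfl fun i hi => ?_
        have hi' : i < r := Finset.mem_range.1 hi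
        have : r - (i + 1) + 1 = r - i := by omega
        rw [this]
      · simp [ff]
    rw [h3]
    ring

lemma shift_sum (n i : ℕ) (g : ℕ → ℝ) (h0 : ∀ j, j < i → g j = 0)
    (h1 : ∀ j, n < j → g j = 0) :
    ∑ j ∈ Finset.range (n + 1), g j = ∑ r ∈ Finset.range (n + 1), g (i + r) := by
  have e1 : ∑ j ∈ Finset.range (n + 1), g j = ∑ j ∈ Finset.range (i + (n + 1)), g j := by
    apply Finset.sum_subset (Finset.range_subset_range.2 (show n + 1 ≤ i + (n + 1) by omega))
    intro j hj hj'
    simp only [Finset.mem_range] at hj hj'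
    exact h1 j (by omega)
  rw [e1, Finset.range_eq_Ico,
    ← Finset.sum_Ico_consecutive _ (Nat.zero_le i) (by omega : i ≤ i + (n + 1))]
  have e2 : ∑ j ∈ Finset.Ico 0 i, g j = 0 :=
    Finset.sum_eq_zero fun j hj => h0 j (by simp only [Finset.mem_Ico] at hj; omega)
  rw [e2, zero_add, Finset.sum_Ico_eq_sum_range]
  simp

lemma choose_mul_choose (n i r : ℕ) (hi : i ≤ n) :
    n.choose (i + r) * (i + r).choose i = n.choose i * (n - i).choose r := by
  rcases le_or_gt (i + r) n with h | h
  · have := @Nat.choose_mul n (i + r) i (Nat.le_add_right i r)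
    rw [this, Nat.add_sub_cancel_left]
  · rw [Nat.choose_eq_zero_of_lt h, Nat.choose_eq_zero_of_lt (show n - i < r by omega)]
    simp

lemma inner_expand (n k : ℕ) (hk : k ≤ n) (v : ℝ) (t : ℕ → ℝ) :
    ∑ j ∈ Finset.range (n + 1), (n.choose j : ℝ) * ff (v + 2 * n - k) j * t j
  = ∑ i ∈ Finset.range (n + 1), ∑ r ∈ Finset.range (n + 1),
      ((n.choose i : ℝ) * ((n - i).choose r : ℝ) * ((r.factorial : ℝ) * ((n - k).choose r : ℝ)))
        * ff (v + n) i * t (i + r) := by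
  have hsplit : (v + 2 * (n : ℝ) - k) = (v + n) + ((n - k : ℕ) : ℝ) := by
    rw [Nat.cast_sub hk]; ring
  have step1 : ∀ j ∈ Finset.range (n + 1),
      (n.choose j : ℝ) * ff (v + 2 * n - k) j * t j
        = ∑ i ∈ Finset.range (n + 1),
            (n.choose j : ℝ) * ((j.choose i : ℝ) * ff (v + n) i
              * ((n - k).descFactorial (j - i) : ℝ)) * t j := by
    intro j hj
    have hj' : j ≤ n := by simp only [Finset.mem_range] at hj; omega
    rw [hsplit, ff_add]
    have : ∀ i, ff ((n - k : ℕ) : ℝ) (j - i) = ((n - k).descFactorial (j - i) : ℝ) :=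
      fun i => ff_nat _ _
    calc (n.choose j : ℝ) * (∑ i ∈ Finset.range (j + 1),
            (j.choose i : ℝ) * ff (v + n) i * ff ((n - k : ℕ) : ℝ) (j - i)) * t j
        = ∑ i ∈ Finset.range (j + 1), (n.choose j : ℝ) * ((j.choose i : ℝ) * ff (v + n) i
            * ((n - k).descFactorial (j - i) : ℝ)) * t j := by
          rw [Finset.mul_sum, Finset.sum_mul]
          exact Finset.sum_congr rfl fun i _ => by rw [this i]
      _ = ∑ i ∈ Finset.range (n + 1), (n.choose j : ℝ) * ((j.choose i : ℝ) * ff (v + n) i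
            * ((n - k).descFactorial (j - i) : ℝ)) * t j := by
          refine Finset.sum_subset (Finset.range_subset_range.2 (by omega)) fun i hi hi' => ?_
          simp only [Finset.mem_range] at hi hi'
          rw [Nat.choose_eq_zero_of_lt (by omega : j < i)]
          simp
  rw [Finset.sum_congr rfl step1, Finset.sum_comm]
  refine Finset.sum_congr rfl fun i hi => ?_
  have hi' : i ≤ n := by simp only [Finset.mem_range] at hi; omega
  rw [shift_sum n i _ (fun j hji => by rw [Nat.choose_eq_zero_of_lt hji]; simp)
      (fun j hnj => by rw [Nat.choose_eq_zero_of_lt hnj]; simp)]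
  refine Finset.sum_congr rfl fun r _ => ?_
  rw [Nat.add_sub_cancel_left, Nat.descFactorial_eq_factorial_mul_choose]
  have hcc : (n.choose (i + r) : ℝ) * ((i + r).choose i : ℝ)
      = (n.choose i : ℝ) * ((n - i).choose r : ℝ) := by
    rw [← Nat.cast_mul, ← Nat.cast_mul, choose_mul_choose n i r hi']
  push_cast
  linear_combination (ff (v + (n:ℝ)) i * ((r.factorial : ℝ) * ((n - k).choose r : ℝ)) * t (i + r)) * hcc

lemma symm_sum (n : ℕ) (u v : ℝ) (cc : ℕ → ℝ) :
    ∑ k ∈ Finset.range (n + 1), ∑ j ∈ Finset.range (n + 1),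
      (n.choose k : ℝ) * (n.choose j : ℝ) * ff (u + n) k * ff (v + 2 * n - k) j * cc (k + j)
  = ∑ k ∈ Finset.range (n + 1), ∑ j ∈ Finset.range (n + 1),
      (n.choose k : ℝ) * (n.choose j : ℝ) * ff (v + n) k * ff (u + 2 * n - k) j * cc (k + j) := by
  have key : ∀ w z : ℝ,
      (∑ k ∈ Finset.range (n + 1), ∑ j ∈ Finset.range (n + 1),
        (n.choose k : ℝ) * (n.choose j : ℝ) * ff (w + n) k * ff (z + 2 * n - k) j * cc (k + j))
      = ∑ k ∈ Finset.range (n + 1), ∑ i ∈ Finset.range (n + 1), ∑ r ∈ Finset.range (n + 1),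
          ((n.choose k : ℝ) * (n.choose i : ℝ) * ((n - i).choose r : ℝ)
            * ((n - k).choose r : ℝ) * (r.factorial : ℝ))
            * ff (w + n) k * ff (z + n) i * cc (k + i + r) := by
    intro w z
    refine Finset.sum_congr rfl fun k hk => ?_
    have hk' : k ≤ n := by simp only [Finset.mem_range] at hk; omega
    calc ∑ j ∈ Finset.range (n + 1),
          (n.choose k : ℝ) * (n.choose j : ℝ) * ff (w + n) k * ff (z + 2 * n - k) j * cc (k + j)
        = ((n.choose k : ℝ) * ff (w + n) k) * ∑ j ∈ Finset.range (n + 1),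
            (n.choose j : ℝ) * ff (z + 2 * n - k) j * cc (k + j) := by
          rw [Finset.mul_sum]; exact Finset.sum_congr rfl fun j _ => by ring
      _ = ((n.choose k : ℝ) * ff (w + n) k) * ∑ i ∈ Finset.range (n + 1),
            ∑ r ∈ Finset.range (n + 1),
            ((n.choose i : ℝ) * ((n - i).choose r : ℝ)
              * ((r.factorial : ℝ) * ((n - k).choose r : ℝ)))
              * ff (z + n) i * cc (k + (i + r)) := by
          rw [inner_expand n k hk' z (fun j => cc (k + j))]
      _ = ∑ i ∈ Finset.range (n + 1), ∑ r ∈ Finset.range (n + 1),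
          ((n.choose k : ℝ) * (n.choose i : ℝ) * ((n - i).choose r : ℝ)
            * ((n - k).choose r : ℝ) * (r.factorial : ℝ))
            * ff (w + n) k * ff (z + n) i * cc (k + i + r) := by
          rw [Finset.mul_sum]
          refine Finset.sum_congr rfl fun i _ => ?_
          rw [Finset.mul_sum]
          refine Finset.sum_congr rfl fun r _ => ?_
          have h : k + (i + r) = k + i + r := by omega
          rw [h]; ring
  rw [key u v, key v u, Finset.sum_comm]
  refine Finset.sum_congr rfl fun k _ => Finset.sum_congr rfl fun i _ =>
    Finset.sum_congr rfl fun r _ => ?_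
  have h : i + k + r = k + i + r := by omega
  rw [h]; ring

lemma iteratedDeriv_comp_iteratedDeriv (f : ℝ → ℝ) (a b : ℕ) :
    iteratedDeriv a (iteratedDeriv b f) = iteratedDeriv (a + b) f := by
  induction a with
  | zero => simp
  | succ a ih =>
    rw [iteratedDeriv_succ, ih]
    have : a + b + 1 = a + 1 + b := by omega
    rw [← iteratedDeriv_succ, this]

lemma step_sum (m : ℕ) (c x : ℝ) (u : ℕ → ℝ) :
    ∑ k ∈ Finset.range (m + 1), ((m.choose k : ℝ) * ff c k) *
      ((c - (k : ℝ)) * x ^ (c - (k : ℝ) - 1) * u (m - k) + x ^ (c - (k : ℝ)) * u (m - k + 1))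
  = ∑ k ∈ Finset.range (m + 2), (((m + 1).choose k : ℝ) * ff c k) *
      (x ^ (c - (k : ℝ)) * u (m + 1 - k)) := by
  have hsplit : ∀ k ∈ Finset.range (m + 1),
      ((m.choose k : ℝ) * ff c k) *
        ((c - (k : ℝ)) * x ^ (c - (k : ℝ) - 1) * u (m - k) + x ^ (c - (k : ℝ)) * u (m - k + 1))
      = (m.choose k : ℝ) * (ff c (k + 1) * (x ^ (c - ((k + 1 : ℕ) : ℝ)) * u (m - k)))
        + (m.choose k : ℝ) * (ff c k * (x ^ (c - (k : ℝ)) * u (m - k + 1))) := by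
    intro k _
    have he : c - (k : ℝ) - 1 = c - ((k + 1 : ℕ) : ℝ) := by push_cast; ring
    rw [ff_succ, he]; ring
  rw [Finset.sum_congr rfl hsplit, Finset.sum_add_distrib]
  rw [Finset.sum_range_succ' (fun k => (((m + 1).choose k : ℝ) * ff c k) *
      (x ^ (c - (k : ℝ)) * u (m + 1 - k))) (m + 1)]
  have h2 : ∀ k ∈ Finset.range (m + 1),
      (((m + 1).choose (k + 1) : ℝ) * ff c (k + 1)) *
        (x ^ (c - ((k + 1 : ℕ) : ℝ)) * u (m + 1 - (k + 1)))
      = (m.choose k : ℝ) * (ff c (k + 1) * (x ^ (c - ((k + 1 : ℕ) : ℝ)) * u (m - k)))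
        + (m.choose (k + 1) : ℝ) * (ff c (k + 1) * (x ^ (c - ((k + 1 : ℕ) : ℝ)) * u (m - k))) := by
    intro k _
    have h3 : m + 1 - (k + 1) = m - k := by omega
    rw [h3, Nat.choose_succ_succ', Nat.cast_add]; ring
  rw [Finset.sum_congr rfl h2, Finset.sum_add_distrib]
  have h4 : ∑ k ∈ Finset.range (m + 1), (m.choose k : ℝ) * (ff c k * (x ^ (c - (k : ℝ)) * u (m - k + 1)))
      = (∑ k ∈ Finset.range (m + 1), (m.choose (k + 1) : ℝ) *
          (ff c (k + 1) * (x ^ (c - ((k + 1 : ℕ) : ℝ)) * u (m - k))))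
        + (((m + 1).choose 0 : ℝ) * ff c 0) * (x ^ (c - ((0 : ℕ) : ℝ)) * u (m + 1 - 0)) := by
    rw [Finset.sum_range_succ' (fun k => (m.choose k : ℝ) *
        (ff c k * (x ^ (c - (k : ℝ)) * u (m - k + 1)))) m]
    rw [Finset.sum_range_succ (fun k => (m.choose (k + 1) : ℝ) *
        (ff c (k + 1) * (x ^ (c - ((k + 1 : ℕ) : ℝ)) * u (m - k)))) m]
    have hlast : (m.choose (m + 1) : ℝ) *
        (ff c (m + 1) * (x ^ (c - ((m + 1 : ℕ) : ℝ)) * u (m - m))) = 0 := by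
      rw [Nat.choose_eq_zero_of_lt (by omega)]; simp
    rw [hlast, add_zero]
    congr 1
    · refine Finset.sum_congr rfl fun k hk => ?_
      have hk' : k < m := Finset.mem_range.1 hk
      have h5 : m - (k + 1) + 1 = m - k := by omega
      rw [h5]
    · simp [ff]
  rw [h4]
  ring

lemma masterSum (N : ℕ) (K c : ℕ → ℝ) (Gs : ℕ → ℝ → ℝ)
    (hGs : ∀ i m, Differentiable ℝ (iteratedDeriv m (Gs i))) :
    ∀ (m : ℕ) (x : ℝ), x ≠ 0 →
      iteratedDeriv m (fun y => ∑ i ∈ Finset.range N, K i * (y ^ c i * Gs i y)) x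
        = ∑ i ∈ Finset.range N, K i * ∑ k ∈ Finset.range (m + 1),
            ((m.choose k : ℝ) * ff (c i) k) *
              (x ^ (c i - (k : ℝ)) * iteratedDeriv (m - k) (Gs i) x) := by
  intro m
  induction m with
  | zero =>
    intro x hx
    simp [ff]
  | succ m ih =>
    intro x hx
    rw [iteratedDeriv_succ]
    have hopen : {y : ℝ | y ≠ 0} ∈ nhds x := by
      refine isOpen_compl_singleton.mem_nhds ?_
      simpa using hx
    have hev : iteratedDeriv m (fun y => ∑ i ∈ Finset.range N, K i * (y ^ c i * Gs i y))
        =ᶠ[nhds x] fun y => ∑ i ∈ Finset.range N, K i * ∑ k ∈ Finset.range (m + 1),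
            ((m.choose k : ℝ) * ff (c i) k) *
              (y ^ (c i - (k : ℝ)) * iteratedDeriv (m - k) (Gs i) y) :=
      Filter.eventuallyEq_of_mem hopen fun y hy => ih y hy
    rw [hev.deriv_eq]
    have hterm : ∀ i ∈ Finset.range N, ∀ k ∈ Finset.range (m + 1),
        HasDerivAt (fun y => y ^ (c i - (k : ℝ)) * iteratedDeriv (m - k) (Gs i) y)
          ((c i - (k : ℝ)) * x ^ (c i - (k : ℝ) - 1) * iteratedDeriv (m - k) (Gs i) x
            + x ^ (c i - (k : ℝ)) * iteratedDeriv (m - k + 1) (Gs i) x) x := by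
      intro i _ k _
      have h1 : HasDerivAt (fun y : ℝ => y ^ (c i - (k : ℝ)))
          ((c i - (k : ℝ)) * x ^ (c i - (k : ℝ) - 1)) x :=
        Real.hasDerivAt_rpow_const (Or.inl hx)
      have h2 : HasDerivAt (iteratedDeriv (m - k) (Gs i))
          (iteratedDeriv (m - k + 1) (Gs i) x) x := by
        rw [iteratedDeriv_succ]
        exact ((hGs i (m - k)) x).hasDerivAt
      exact h1.mul h2
    have hD : HasDerivAt (fun y => ∑ i ∈ Finset.range N, K i * ∑ k ∈ Finset.range (m + 1),
          ((m.choose k : ℝ) * ff (c i) k) *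
            (y ^ (c i - (k : ℝ)) * iteratedDeriv (m - k) (Gs i) y))
        (∑ i ∈ Finset.range N, K i * ∑ k ∈ Finset.range (m + 1),
          ((m.choose k : ℝ) * ff (c i) k) *
            ((c i - (k : ℝ)) * x ^ (c i - (k : ℝ) - 1) * iteratedDeriv (m - k) (Gs i) x
              + x ^ (c i - (k : ℝ)) * iteratedDeriv (m - k + 1) (Gs i) x)) x := by
      refine HasDerivAt.fun_sum fun i hi => ?_
      refine HasDerivAt.const_mul _ ?_
      refine HasDerivAt.fun_sum fun k hk => ?_
      exact (hterm i hi k hk).const_mul _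
    rw [hD.deriv]
    refine Finset.sum_congr rfl fun i _ => ?_
    congr 1
    exact step_sum m (c i) x fun j => iteratedDeriv j (Gs i) x

noncomputable def GG (b : ℝ) (n : ℕ) : ℝ → ℝ := fun z => (1 - z) ^ (2 * n + 1) * Real.exp (-b * z)

lemma GG_diff (b : ℝ) (n : ℕ) : ∀ m, Differentiable ℝ (iteratedDeriv m (GG b n)) := by
  have hsm : ContDiff ℝ (⊤ : ℕ∞) (GG b n) := by
    unfold GG
    exact ((contDiff_const.sub contDiff_id).pow _).mul
      ((contDiff_const.mul contDiff_id).exp)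
  exact fun m => (contDiff_iff_iteratedDeriv.1 hsm).2 m (by simp)

lemma master1 (c : ℝ) (G : ℝ → ℝ) (hG : ∀ m, Differentiable ℝ (iteratedDeriv m G))
    (m : ℕ) (x : ℝ) (hx : x ≠ 0) :
    iteratedDeriv m (fun y => y ^ c * G y) x
      = ∑ k ∈ Finset.range (m + 1), ((m.choose k : ℝ) * ff c k) *
          (x ^ (c - (k : ℝ)) * iteratedDeriv (m - k) G x) := by
  have h := masterSum 1 (fun _ => 1) (fun _ => c) (fun _ => G) (fun _ => hG) m x hx
  simpa using h

lemma key_s13 (a₁ a₂ b : ℝ) (n : ℕ) (x : ℝ) (hx0 : 0 < x) (hx1 : x ≠ 1) :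
    JacobiLaguerre a₁ a₂ b n x
      = (1 / ((n.factorial : ℝ)) ^ 2) * ((1 - x)⁻¹ * Real.exp (b * x)) *
        ∑ k ∈ Finset.range (n + 1), ∑ j ∈ Finset.range (n + 1),
          (n.choose k : ℝ) * (n.choose j : ℝ) * ff (a₂ + n) k * ff (a₁ + 2 * n - k) j *
            (x ^ ((2 * (n : ℝ)) - ((k + j : ℕ) : ℝ)) *
              iteratedDeriv (2 * n - (k + j)) (GG b n) x) := by
  have hGdiff := GG_diff b n
  have hGs : ∀ (k m : ℕ), Differentiable ℝ (iteratedDeriv m (iteratedDeriv (n - k) (GG b n))) := by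
    intro k m
    rw [iteratedDeriv_comp_iteratedDeriv]
    exact hGdiff _
  -- inner derivative formula
  have hinner : ∀ y : ℝ, 0 < y →
      iteratedDeriv n (fun z => weight a₂ b z * z ^ n * (1 - z) ^ (2 * n)) y
        = ∑ k ∈ Finset.range (n + 1), ((n.choose k : ℝ) * ff (a₂ + (n : ℝ)) k) *
            (y ^ (a₂ + (n : ℝ) - (k : ℝ)) * iteratedDeriv (n - k) (GG b n) y) := by
    intro y hy
    have hmem : {z : ℝ | 0 < z} ∈ nhds y := (isOpen_lt continuous_const continuous_id).mem_nhds hy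
    have hev : (fun z => weight a₂ b z * z ^ n * (1 - z) ^ (2 * n))
        =ᶠ[nhds y] fun z => z ^ (a₂ + (n : ℝ)) * GG b n z := by
      filter_upwards [hmem] with z hz
      simp only [weight, GG]
      rw [Real.rpow_add hz, Real.rpow_natCast, pow_succ]
      ring
    rw [Filter.EventuallyEq.iteratedDeriv_eq n hev]
    exact master1 (a₂ + (n : ℝ)) (GG b n) hGdiff n y (ne_of_gt hy)
  -- outer integrand is eventually a nice sum
  have hU : {y : ℝ | 0 < y ∧ y ≠ 1} ∈ nhds x := by
    have : IsOpen {y : ℝ | 0 < y ∧ y ≠ 1} :=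
      (isOpen_lt continuous_const continuous_id).inter isOpen_ne
    exact this.mem_nhds ⟨hx0, hx1⟩
  have hout : (fun y => weight a₁ b y * y ^ n * (weight a₂ b y)⁻¹ *
        iteratedDeriv n (fun z => weight a₂ b z * z ^ n * (1 - z) ^ (2 * n)) y)
      =ᶠ[nhds x] fun y => ∑ k ∈ Finset.range (n + 1),
          ((n.choose k : ℝ) * ff (a₂ + (n : ℝ)) k) *
            (y ^ (a₁ + 2 * (n : ℝ) - (k : ℝ)) * iteratedDeriv (n - k) (GG b n) y) := by
    filter_upwards [hU] with y hy
    obtain ⟨hy0, hy1⟩ := hy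
    rw [hinner y hy0]
    have h1y : (1 : ℝ) - y ≠ 0 := sub_ne_zero.2 (Ne.symm hy1)
    have hya : (y : ℝ) ^ a₂ ≠ 0 := ne_of_gt (Real.rpow_pos_of_pos hy0 _)
    have hpre : weight a₁ b y * y ^ n * (weight a₂ b y)⁻¹ = y ^ (a₁ - a₂ + (n : ℝ)) := by
      simp only [weight]
      rw [show a₁ - a₂ + (n : ℝ) = a₁ + (-a₂) + (n : ℝ) by ring,
        Real.rpow_add hy0, Real.rpow_add hy0, Real.rpow_neg hy0.le, Real.rpow_natCast]
      field_simp
    rw [hpre, Finset.mul_sum]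
    refine Finset.sum_congr rfl fun k _ => ?_
    have hyy : y ^ (a₁ + 2 * (n : ℝ) - (k : ℝ))
        = y ^ (a₁ - a₂ + (n : ℝ)) * y ^ (a₂ + (n : ℝ) - (k : ℝ)) := by
      rw [← Real.rpow_add hy0]
      congr 1
      ring
    rw [hyy]
    generalize y ^ (a₁ - a₂ + (n : ℝ)) = P
    generalize y ^ (a₂ + (n : ℝ) - (k : ℝ)) = Q
    ring
  -- apply the master formula to the outer derivative
  simp only [JacobiLaguerre]
  rw [Filter.EventuallyEq.iteratedDeriv_eq n hout]
  rw [masterSum (n + 1) (fun k => (n.choose k : ℝ) * ff (a₂ + (n : ℝ)) k)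
      (fun k => a₁ + 2 * (n : ℝ) - (k : ℝ)) (fun k => iteratedDeriv (n - k) (GG b n))
      (fun k m => hGs k m) n x (ne_of_gt hx0)]
  -- algebra: distribute prefactors and match terms
  simp only [Finset.mul_sum]
  refine Finset.sum_congr rfl fun k hk => Finset.sum_congr rfl fun j hj => ?_
  have hk' : k ≤ n := by simp only [Finset.mem_range] at hk; omega
  have hj' : j ≤ n := by simp only [Finset.mem_range] at hj; omega
  have hidx : n - j + (n - k) = 2 * n - (k + j) := by omega
  rw [iteratedDeriv_comp_iteratedDeriv, hidx]
  have h1x : (1 : ℝ) - x ≠ 0 := sub_ne_zero.2 (Ne.symm hx1)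
  have hxa : (x : ℝ) ^ a₁ ≠ 0 := ne_of_gt (Real.rpow_pos_of_pos hx0 _)
  have hsplit : x ^ (a₁ + 2 * (n : ℝ) - (k : ℝ) - (j : ℝ))
      = x ^ a₁ * x ^ ((2 * (n : ℝ)) - ((k + j : ℕ) : ℝ)) := by
    rw [← Real.rpow_add hx0]
    congr 1
    push_cast
    ring
  simp only [weight]
  rw [mul_inv, mul_inv, neg_mul, Real.exp_neg, inv_inv, hsplit]
  field_simp

theorem stmt_13 (a₁ a₂ b : ℝ) (ha₁ : -1 < a₁) (ha₂ : -1 < a₂) (hb : 0 < b)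
    (n : ℕ) (x : ℝ) (hx0 : 0 < x) (hx1 : x ≠ 1) :
    JacobiLaguerre a₁ a₂ b n x = JacobiLaguerre a₂ a₁ b n x := by
  rw [key_s13 a₁ a₂ b n x hx0 hx1, key_s13 a₂ a₁ b n x hx0 hx1]
  congr 1
  exact symm_sum n a₂ a₁
    (fun m => x ^ ((2 * (n : ℝ)) - (m : ℝ)) * iteratedDeriv (2 * n - m) (GG b n) x)
end
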